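/- Let n ≥ 2 be an integer and let α be a real number with 1/√2 ≤ α ≤ 1 and (n−1)·2α√(1−α²) < 1. Let g_1, …, g_n ∈ ℂ^n be nonzero vectors such that for each i, |(g_i)_i| ≥ α·‖g_i‖, where (g_i)_i denotes the i-th coordinate of g_i. Let A be the Gram matrix with entries A_{ij} = ⟨g_i, g_j⟩. Then A is invertible, each (A⁻¹)_{ii} is a positive real number, and 1/(A⁻¹)_{ii} ≥ ‖g_i‖² · (1 − (n−1)·2α√(1−α²)) for every i. -/

import Mathlib

set_option maxHeartbeats 1000000
open Matrix






lemma le_of_sq_le_sq' {u v : ℝ} (hu : 0 ≤ u) (hv : 0 ≤ v) (h : u^2 ≤ v^2) : u ≤ v := by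
  nlinarith

lemma alg_bound {α β a s c t : ℝ} (hs0 : 0 ≤ s) (hc0 : 0 ≤ c)
    (hα0 : 0 ≤ α) (hβ0 : 0 ≤ β)
    (hαβ : α^2 + β^2 = 1) (hβα : β ≤ α)
    (h1 : a^2 + s^2 = 1) (h2 : c^2 + t^2 = 1)
    (hαa : α ≤ a) (hsβ : s ≤ β) (hcβ : c ≤ β) (hαt : α ≤ t) :
    a*c + s*t ≤ 2*α*β := by
  have ha0 : 0 ≤ a := le_trans hα0 hαa
  have ht0 : 0 ≤ t := le_trans hα0 hαt
  have h3 : α^2 - β^2 ≤ a*t - c*s := by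
    nlinarith [mul_le_mul hαa hαt hα0 ha0, mul_le_mul hcβ hsβ hs0 hβ0]
  have h30 : 0 ≤ α^2 - β^2 := by nlinarith
  have h6 : (a*c+s*t)^2 ≤ (2*α*β)^2 := by
    nlinarith [mul_self_le_mul_self h30 h3]
  exact le_of_sq_le_sq' (by positivity) (by positivity) h6

lemma cross_bound {n : ℕ} {α : ℝ} (hα1 : 1/Real.sqrt 2 ≤ α) (hα2 : α ≤ 1)
    {i j : Fin n} (hij : i ≠ j) (x y : EuclideanSpace ℂ (Fin n))
    (hx0 : x ≠ 0) (hy0 : y ≠ 0)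
    (hx : α * ‖x‖ ≤ ‖x i‖) (hy : α * ‖y‖ ≤ ‖y j‖) :
    ‖(inner ℂ x y : ℂ)‖ ≤ (2*α*Real.sqrt (1-α^2)) * (‖x‖ * ‖y‖) := by
  have hα0 : 0 < α := lt_of_lt_of_le (by positivity) hα1
  have h12 : (1:ℝ)/2 ≤ α^2 := by
    have h2 : ((1:ℝ)/Real.sqrt 2)^2 = 1/2 := by
      rw [div_pow, Real.sq_sqrt (by norm_num : (0:ℝ) ≤ 2)]; norm_num
    calc (1:ℝ)/2 = (1/Real.sqrt 2)^2 := h2.symm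
      _ ≤ α^2 := by apply pow_le_pow_left₀ (by positivity) hα1
  set β := Real.sqrt (1-α^2) with hβ
  have hβ0 : 0 ≤ β := Real.sqrt_nonneg _
  have hβsq : β^2 = 1-α^2 := Real.sq_sqrt (by nlinarith)
  have hβα : β ≤ α := by
    rw [hβ]
    calc Real.sqrt (1-α^2) ≤ Real.sqrt (α^2) := Real.sqrt_le_sqrt (by nlinarith)
      _ = α := Real.sqrt_sq hα0.le
  have hNx : (0:ℝ) < ‖x‖ := norm_pos_iff.mpr hx0
  have hNy : (0:ℝ) < ‖y‖ := norm_pos_iff.mpr hy0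
  have hnormsq : ∀ z : EuclideanSpace ℂ (Fin n), ‖z‖^2 = ∑ k, ‖z k‖^2 := by
    intro z
    rw [EuclideanSpace.norm_eq, Real.sq_sqrt (Finset.sum_nonneg fun _ _ => sq_nonneg _)]
  set a := ‖x i‖ with ha
  set c := ‖y i‖ with hc'
  set P := ∑ k ∈ Finset.univ.erase i, ‖x k‖^2 with hP
  set Q := ∑ k ∈ Finset.univ.erase i, ‖y k‖^2 with hQ
  have hP0 : 0 ≤ P := Finset.sum_nonneg fun _ _ => sq_nonneg _
  have hQ0 : 0 ≤ Q := Finset.sum_nonneg fun _ _ => sq_nonneg _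
  have hPx : a^2 + P = ‖x‖^2 := by
    rw [hnormsq x, ← Finset.add_sum_erase _ _ (Finset.mem_univ i)]
  have hQy : c^2 + Q = ‖y‖^2 := by
    rw [hnormsq y, ← Finset.add_sum_erase _ _ (Finset.mem_univ i)]
  have hxsq : α^2 * ‖x‖^2 ≤ a^2 :=
    (mul_pow α ‖x‖ 2) ▸ pow_le_pow_left₀ (by positivity) hx 2
  have hc : c ≤ β * ‖y‖ := by
    have h1 : ‖y j‖^2 + (∑ k ∈ Finset.univ.erase j, ‖y k‖^2) = ‖y‖^2 := by
      rw [hnormsq y, ← Finset.add_sum_erase _ _ (Finset.mem_univ j)]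
    have h2 : c^2 ≤ ∑ k ∈ Finset.univ.erase j, ‖y k‖^2 :=
      Finset.single_le_sum (f := fun k => ‖y k‖^2)
        (fun _ _ => sq_nonneg _) (Finset.mem_erase.mpr ⟨hij, Finset.mem_univ i⟩)
    have hysq : α^2 * ‖y‖^2 ≤ ‖y j‖^2 :=
      (mul_pow α ‖y‖ 2) ▸ pow_le_pow_left₀ (by positivity) hy 2
    apply le_of_sq_le_sq' (norm_nonneg _) (by positivity)
    rw [mul_pow]
    nlinarith
  have hinner : (inner ℂ x y : ℂ) = ∑ k, (starRingEnd ℂ) (x k) * y k := by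
    simp [PiLp.inner_apply, RCLike.inner_apply]
    exact Finset.sum_congr rfl fun _ _ => mul_comm _ _
  have step1 : ‖(inner ℂ x y : ℂ)‖ ≤
      a*c + ∑ k ∈ Finset.univ.erase i, ‖x k‖ * ‖y k‖ := by
    rw [hinner, ← Finset.add_sum_erase _ _ (Finset.mem_univ i)]
    refine le_trans (norm_add_le _ _) (add_le_add ?_ ?_)
    · simp [norm_mul, ha, hc']
    · refine le_trans (norm_sum_le _ _) (le_of_eq ?_)
      exact Finset.sum_congr rfl fun k _ => by simp [norm_mul]
  have hCS : ∑ k ∈ Finset.univ.erase i, ‖x k‖ * ‖y k‖ ≤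
      Real.sqrt P * Real.sqrt Q := by
    apply le_of_sq_le_sq' (Finset.sum_nonneg fun _ _ => mul_nonneg (norm_nonneg _) (norm_nonneg _)) (mul_nonneg (Real.sqrt_nonneg _) (Real.sqrt_nonneg _))
    rw [mul_pow, Real.sq_sqrt hP0, Real.sq_sqrt hQ0]
    exact Finset.sum_mul_sq_le_sq_mul_sq _ _ _
  have e1 : (a/‖x‖)^2 + (Real.sqrt P/‖x‖)^2 = 1 := by
    rw [div_pow, div_pow, Real.sq_sqrt hP0, ← add_div, hPx, div_self (pow_ne_zero 2 hNx.ne')]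
  have e2 : (c/‖y‖)^2 + (Real.sqrt Q/‖y‖)^2 = 1 := by
    rw [div_pow, div_pow, Real.sq_sqrt hQ0, ← add_div, hQy, div_self (pow_ne_zero 2 hNy.ne')]
  have e3 : α ≤ a/‖x‖ := by rw [le_div_iff₀ hNx]; exact hx
  have e4 : Real.sqrt P/‖x‖ ≤ β := by
    rw [div_le_iff₀ hNx]
    apply le_of_sq_le_sq' (Real.sqrt_nonneg _) (mul_nonneg hβ0 hNx.le)
    rw [Real.sq_sqrt hP0, mul_pow]; nlinarith
  have e5 : c/‖y‖ ≤ β := by rw [div_le_iff₀ hNy]; exact hc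
  have e6 : α ≤ Real.sqrt Q/‖y‖ := by
    rw [le_div_iff₀ hNy]
    apply le_of_sq_le_sq' (mul_nonneg hα0.le hNy.le) (Real.sqrt_nonneg _)
    rw [Real.sq_sqrt hQ0, mul_pow]
    nlinarith [mul_le_mul hc hc (norm_nonneg (y i)) (mul_nonneg hβ0 hNy.le)]
  have key := alg_bound (α := α) (β := β) (a := a/‖x‖) (s := Real.sqrt P/‖x‖)
      (c := c/‖y‖) (t := Real.sqrt Q/‖y‖)
      (div_nonneg (Real.sqrt_nonneg _) hNx.le) (div_nonneg (norm_nonneg _) hNy.le)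
      hα0.le hβ0 (by rw [hβsq]; ring) hβα e1 e2 e3 e4 e5 e6
  calc ‖(inner ℂ x y : ℂ)‖ ≤ a*c + Real.sqrt P * Real.sqrt Q :=
        le_trans step1 (by linarith)
    _ = (‖x‖*‖y‖) * ((a/‖x‖)*(c/‖y‖) + (Real.sqrt P/‖x‖)*(Real.sqrt Q/‖y‖)) := by
        field_simp
    _ ≤ (‖x‖*‖y‖) * (2*α*β) := mul_le_mul_of_nonneg_left key (mul_nonneg hNx.le hNy.le)
    _ = (2*α*β) * (‖x‖ * ‖y‖) := by ring




/-- effective channel gain lower bound, eq. (58) of the paper: if each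
nonzero `g i ∈ ℂ^n` lies in the double cone around the `i`-th standard basis direction
(`|(g i)_i| ≥ α‖g i‖`), with `1/√2 ≤ α ≤ 1` and `(n-1)·2α√(1-α²) < 1`, then the Gram
matrix `A = (⟪g i, g j⟫)` is invertible, each `(A⁻¹)_{ii}` is a positive real, and
`1/(A⁻¹)_{ii} ≥ ‖g i‖²(1 - (n-1)·2α√(1-α²))`. -/
theorem stmt_8 (n : ℕ) (hn : 2 ≤ n) (α : ℝ) (hα1 : 1 / Real.sqrt 2 ≤ α) (hα2 : α ≤ 1)
    (hsmall : (n - 1 : ℝ) * (2 * α * Real.sqrt (1 - α ^ 2)) < 1)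
    (g : Fin n → EuclideanSpace ℂ (Fin n)) (hg : ∀ i, g i ≠ 0)
    (hcone : ∀ i, α * ‖g i‖ ≤ ‖g i i‖)
    (A : Matrix (Fin n) (Fin n) ℂ)
    (hAdef : ∀ i j, A i j = (inner ℂ (g i) (g j) : ℂ)) :
    IsUnit A ∧ ∀ i, (A⁻¹ i i).im = 0 ∧ 0 < (A⁻¹ i i).re ∧
      ‖g i‖ ^ 2 * (1 - (n - 1 : ℝ) * (2 * α * Real.sqrt (1 - α ^ 2))) ≤
        1 / (A⁻¹ i i).re := by
  have hα0 : 0 < α := lt_of_lt_of_le (by positivity) hα1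
  set δ := 2 * α * Real.sqrt (1 - α ^ 2) with hδ
  have hδ0 : 0 ≤ δ := by positivity
  set r := ((n : ℝ) - 1) * δ with hr
  have hn1 : (1:ℝ) ≤ (n:ℝ) - 1 := by
    have : (2:ℝ) ≤ (n:ℝ) := by exact_mod_cast hn
    linarith
  have hr0 : 0 ≤ r := mul_nonneg (by linarith) hδ0
  have hr1 : r < 1 := hsmall
  have hN : ∀ k, (0:ℝ) < ‖g k‖ := fun k => norm_pos_iff.mpr (hg k)
  have hcross : ∀ i j, i ≠ j → ‖A i j‖ ≤ δ * (‖g i‖ * ‖g j‖) := by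
    intro i j hij
    rw [hAdef i j]
    exact cross_bound hα1 hα2 hij (g i) (g j) (hg i) (hg j) (hcone i) (hcone j)
  have hdiag : ∀ i, A i i = ((‖g i‖^2 : ℝ) : ℂ) := by
    intro i
    rw [hAdef i i, inner_self_eq_norm_sq_to_K]
    norm_cast
  have hmv : ∀ (x : Fin n → ℂ) (i : Fin n),
      (A *ᵥ x) i = (inner ℂ (g i) (∑ j, x j • g j) : ℂ) := by
    intro x i
    rw [inner_sum]
    simp only [Matrix.mulVec, dotProduct, inner_smul_right, hAdef]
    exact Finset.sum_congr rfl fun j _ => mul_comm _ _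
  have hcard : ∀ j0 : Fin n, ((Finset.univ.erase j0).card : ℝ) = (n:ℝ) - 1 := by
    intro j0
    rw [Finset.card_erase_of_mem (Finset.mem_univ j0), Finset.card_univ, Fintype.card_fin]
    rw [Nat.cast_sub (by omega)]
    norm_num
  -- kernel triviality
  have hker : ∀ x : Fin n → ℂ, A *ᵥ x = 0 → x = 0 := by
    intro x hx
    set f := fun k => ‖g k‖ * ‖x k‖ with hf
    have hf0 : ∀ k, 0 ≤ f k := fun k => mul_nonneg (hN k).le (norm_nonneg _)
    obtain ⟨j0, -, hj0⟩ := Finset.exists_max_image Finset.univ f ⟨⟨0, by omega⟩, Finset.mem_univ _⟩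
    have hj0' : ∀ k, f k ≤ f j0 := fun k => hj0 k (Finset.mem_univ k)
    have hfj0 : f j0 = 0 := by
      have hsum : ∑ k, A j0 k * x k = 0 := by
        have := congrFun hx j0
        simpa [Matrix.mulVec, dotProduct] using this
      have hsplit : A j0 j0 * x j0 = -∑ k ∈ Finset.univ.erase j0, A j0 k * x k := by
        rw [← Finset.add_sum_erase _ _ (Finset.mem_univ j0)] at hsum
        exact eq_neg_of_add_eq_zero_left hsum
      have habs : ‖g j0‖^2 * ‖x j0‖ ≤
          δ * ‖g j0‖ * (((n:ℝ) - 1) * f j0) := by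
        have h1 : ‖A j0 j0 * x j0‖ = ‖g j0‖^2 * ‖x j0‖ := by
          rw [norm_mul, hdiag, Complex.norm_real, Real.norm_eq_abs, abs_of_nonneg (by positivity)]
        have h2 : ‖A j0 j0 * x j0‖ ≤
            ∑ k ∈ Finset.univ.erase j0, ‖A j0 k * x k‖ := by
          rw [hsplit, norm_neg]
          exact norm_sum_le _ _
        have h3 : ∑ k ∈ Finset.univ.erase j0, ‖A j0 k * x k‖ ≤
            ∑ k ∈ Finset.univ.erase j0, δ * ‖g j0‖ * f k := by
          apply Finset.sum_le_sum
          intro k hk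
          rw [norm_mul]
          have := hcross j0 k (Finset.ne_of_mem_erase hk).symm
          calc ‖A j0 k‖ * ‖x k‖
              ≤ δ * (‖g j0‖ * ‖g k‖) * ‖x k‖ :=
                mul_le_mul_of_nonneg_right this (norm_nonneg _)
            _ = δ * ‖g j0‖ * f k := by rw [hf]; ring
        have h4 : ∑ k ∈ Finset.univ.erase j0, δ * ‖g j0‖ * f k ≤
            δ * ‖g j0‖ * (((n:ℝ) - 1) * f j0) := by
          rw [← Finset.mul_sum]
          apply mul_le_mul_of_nonneg_left _ (by positivity)
          calc ∑ k ∈ Finset.univ.erase j0, f k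
              ≤ (Finset.univ.erase j0).card • f j0 :=
                Finset.sum_le_card_nsmul _ _ _ (fun k _ => hj0' k)
            _ = ((Finset.univ.erase j0).card : ℝ) * f j0 := by rw [nsmul_eq_mul]
            _ = ((n:ℝ) - 1) * f j0 := by rw [hcard]
        linarith [h1 ▸ le_trans h2 (le_trans h3 h4)]
      have hstep : ‖g j0‖ * f j0 ≤ ‖g j0‖ * (r * f j0) := by
        calc ‖g j0‖ * f j0 = ‖g j0‖^2 * ‖x j0‖ := by rw [hf]; ring
          _ ≤ δ * ‖g j0‖ * (((n:ℝ) - 1) * f j0) := habs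
          _ = ‖g j0‖ * (r * f j0) := by rw [hr]; ring
      have := le_of_mul_le_mul_left hstep (hN j0)
      nlinarith [hf0 j0]
    funext k
    have hk : f k = 0 := le_antisymm (hfj0 ▸ hj0' k) (hf0 k)
    have : ‖x k‖ = 0 := by
      rcases mul_eq_zero.mp hk with h | h
      · exact absurd h (hN k).ne'
      · exact h
    simpa using this
  have hdetu : IsUnit A.det := by
    rw [isUnit_iff_ne_zero]
    intro h
    obtain ⟨v, hv0, hv⟩ := (Matrix.exists_mulVec_eq_zero_iff).mpr h
    exact hv0 (hker v hv)
  have hAunit : IsUnit A := (Matrix.isUnit_iff_isUnit_det A).mpr hdetu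
  refine ⟨hAunit, fun i => ?_⟩
  set C := A⁻¹ with hC
  have hCA : C * A = 1 := Matrix.nonsing_inv_mul A hdetu
  have hAC : A * C = 1 := Matrix.mul_nonsing_inv A hdetu
  -- realness and positivity of C i i
  set x := C *ᵥ (Pi.single i 1) with hxdef
  have hx : A *ᵥ x = Pi.single i 1 := by
    rw [hxdef, Matrix.mulVec_mulVec, hAC, Matrix.one_mulVec]
  set y := ∑ j, x j • g j with hy
  have hyne : y ≠ 0 := by
    intro h
    have h2 : A *ᵥ x = 0 := by
      funext k
      rw [hmv x k, ← hy, h, inner_zero_right]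
      rfl
    rw [hx] at h2
    have := congrFun h2 i
    simp at this
  have hxi : x i = C i i := by
    rw [hxdef, Matrix.mulVec_single]
    simp
  have hkey : (starRingEnd ℂ) (C i i) = (inner ℂ y y : ℂ) := by
    have h1 : ∑ k, (starRingEnd ℂ) (x k) * (A *ᵥ x) k = (inner ℂ y y : ℂ) := by
      calc ∑ k, (starRingEnd ℂ) (x k) * (A *ᵥ x) k
          = ∑ k, (starRingEnd ℂ) (x k) * (inner ℂ (g k) y : ℂ) := by
            refine Finset.sum_congr rfl fun k _ => ?_
            rw [hmv x k, hy]
        _ = ∑ k, (inner ℂ (x k • g k) y : ℂ) := by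
            refine Finset.sum_congr rfl fun k _ => ?_
            rw [inner_smul_left]
        _ = (inner ℂ y y : ℂ) := by rw [hy, sum_inner]
    have h2 : ∑ k, (starRingEnd ℂ) (x k) * (A *ᵥ x) k = (starRingEnd ℂ) (x i) := by
      rw [hx]
      rw [Finset.sum_eq_single i]
      · simp
      · intro b _ hb
        simp [Pi.single_eq_of_ne hb]
      · intro h; exact absurd (Finset.mem_univ i) h
    rw [← h1, h2, hxi]
  have hCii : C i i = ((‖y‖^2 : ℝ) : ℂ) := by
    have h3 := congrArg (starRingEnd ℂ) hkey
    rw [Complex.conj_conj] at h3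
    rw [h3, inner_conj_symm, inner_self_eq_norm_sq_to_K]
    norm_cast
  have hre : (C i i).re = ‖y‖^2 := by rw [hCii, Complex.ofReal_re]
  have him : (C i i).im = 0 := by rw [hCii, Complex.ofReal_im]
  have hrepos : 0 < (C i i).re := by
    rw [hre]
    have := norm_pos_iff.mpr hyne
    positivity
  refine ⟨him, hrepos, ?_⟩
  -- the bound
  have hbound : (C i i).re * (‖g i‖ * ‖g i‖) * (1 - r) ≤ 1 := by
    set f := fun k => ‖C i k‖ * (‖g k‖ * ‖g i‖) with hf
    have hf0 : ∀ k, 0 ≤ f k :=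
      fun k => mul_nonneg (norm_nonneg _) (mul_nonneg (hN k).le (hN i).le)
    obtain ⟨j0, -, hj0⟩ := Finset.exists_max_image Finset.univ f ⟨⟨0, by omega⟩, Finset.mem_univ _⟩
    have hj0' : ∀ k, f k ≤ f j0 := fun k => hj0 k (Finset.mem_univ k)
    have hone : ∑ k, C i k * A k j0 = (1 : Matrix (Fin n) (Fin n) ℂ) i j0 := by
      have := congrFun (congrFun hCA i) j0
      simpa [Matrix.mul_apply] using this
    have hsplit : C i j0 * A j0 j0 =
        (1 : Matrix (Fin n) (Fin n) ℂ) i j0 - ∑ k ∈ Finset.univ.erase j0, C i k * A k j0 := by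
      rw [← Finset.add_sum_erase _ _ (Finset.mem_univ j0)] at hone
      linear_combination hone
    have habs : ‖C i j0‖ * ‖g j0‖^2 ≤
        ‖(1 : Matrix (Fin n) (Fin n) ℂ) i j0‖ +
          δ * ‖g j0‖ * (((n:ℝ) - 1) * (f j0 / ‖g i‖)) := by
      have h1 : ‖C i j0 * A j0 j0‖ = ‖C i j0‖ * ‖g j0‖^2 := by
        rw [norm_mul, hdiag, Complex.norm_real, Real.norm_eq_abs, abs_of_nonneg (by positivity)]
      have h2 : ‖C i j0 * A j0 j0‖ ≤
          ‖(1 : Matrix (Fin n) (Fin n) ℂ) i j0‖ +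
            ∑ k ∈ Finset.univ.erase j0, ‖C i k * A k j0‖ := by
        rw [hsplit, sub_eq_add_neg]
        refine le_trans (norm_add_le _ _) (add_le_add_right ?_ _)
        rw [norm_neg]
        exact norm_sum_le _ _
      have h3 : ∑ k ∈ Finset.univ.erase j0, ‖C i k * A k j0‖ ≤
          δ * ‖g j0‖ * (((n:ℝ) - 1) * (f j0 / ‖g i‖)) := by
        calc ∑ k ∈ Finset.univ.erase j0, ‖C i k * A k j0‖
            ≤ ∑ k ∈ Finset.univ.erase j0, δ * ‖g j0‖ * (f k / ‖g i‖) := by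
              apply Finset.sum_le_sum
              intro k hk
              rw [norm_mul]
              have := hcross k j0 (Finset.ne_of_mem_erase hk)
              calc ‖C i k‖ * ‖A k j0‖
                  ≤ ‖C i k‖ * (δ * (‖g k‖ * ‖g j0‖)) :=
                    mul_le_mul_of_nonneg_left this (norm_nonneg _)
                _ = δ * ‖g j0‖ * (f k / ‖g i‖) := by
                    rw [show f k = ‖C i k‖ * (‖g k‖ * ‖g i‖) from rfl,
                      show ‖C i k‖ * (‖g k‖ * ‖g i‖) = ‖C i k‖ * ‖g k‖ * ‖g i‖ from by ring,
                      mul_div_cancel_right₀ _ (hN i).ne']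
                    ring
          _ ≤ δ * ‖g j0‖ * (((n:ℝ) - 1) * (f j0 / ‖g i‖)) := by
              rw [← Finset.mul_sum]
              apply mul_le_mul_of_nonneg_left _ (by positivity)
              have hsumf : ∑ k ∈ Finset.univ.erase j0, f k ≤ ((n:ℝ)-1) * f j0 := by
                calc ∑ k ∈ Finset.univ.erase j0, f k
                    ≤ (Finset.univ.erase j0).card • f j0 :=
                      Finset.sum_le_card_nsmul _ _ _ (fun k _ => hj0' k)
                  _ = ((Finset.univ.erase j0).card : ℝ) * f j0 := by rw [nsmul_eq_mul]
                  _ = ((n:ℝ) - 1) * f j0 := by rw [hcard]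
              calc ∑ k ∈ Finset.univ.erase j0, f k / ‖g i‖
                  = (∑ k ∈ Finset.univ.erase j0, f k) / ‖g i‖ := by rw [Finset.sum_div]
                _ ≤ (((n:ℝ)-1) * f j0) / ‖g i‖ := by gcongr
                _ = ((n:ℝ)-1) * (f j0 / ‖g i‖) := by rw [mul_div_assoc]
      linarith [h1 ▸ le_trans h2 (add_le_add_right h3 _)]
    -- multiply habs by ‖g i‖ and case split
    have hmain : f j0 * ‖g j0‖ ≤
        ‖(1 : Matrix (Fin n) (Fin n) ℂ) i j0‖ * ‖g i‖ + ‖g j0‖ * (r * f j0) := by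
      have := mul_le_mul_of_nonneg_right habs (hN i).le
      calc f j0 * ‖g j0‖ = ‖C i j0‖ * ‖g j0‖^2 * ‖g i‖ := by rw [hf]; ring
        _ ≤ (‖(1 : Matrix (Fin n) (Fin n) ℂ) i j0‖ +
              δ * ‖g j0‖ * (((n:ℝ) - 1) * (f j0 / ‖g i‖))) * ‖g i‖ := this
        _ = ‖(1 : Matrix (Fin n) (Fin n) ℂ) i j0‖ * ‖g i‖ +
              δ * ‖g j0‖ * ((n:ℝ) - 1) * (f j0 / ‖g i‖ * ‖g i‖) := by ring
        _ = ‖(1 : Matrix (Fin n) (Fin n) ℂ) i j0‖ * ‖g i‖ + ‖g j0‖ * (r * f j0) := by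
            rw [div_mul_cancel₀ _ (hN i).ne', hr]; ring
    have hfi1 : f i * (1 - r) ≤ 1 := by
      by_cases hij : i = j0
      · subst hij
        rw [Matrix.one_apply_eq, norm_one, one_mul] at hmain
        have h5 : f i ≤ 1 + r * f i := by
          have := hmain
          nlinarith [hN i]
        nlinarith
      · rw [Matrix.one_apply_ne hij, norm_zero, zero_mul] at hmain
        have h5 : f j0 ≤ r * f j0 := by
          have h6 : ‖g j0‖ * f j0 ≤ ‖g j0‖ * (r * f j0) := by linarith
          exact le_of_mul_le_mul_left h6 (hN j0)
        have h7 : f j0 ≤ 0 := by nlinarith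
        have h8 : f i ≤ 0 := le_trans (hj0' i) h7
        nlinarith [hf0 i]
    have hfabs : ‖C i i‖ = (C i i).re := by
      rw [hCii, Complex.norm_real, Real.norm_eq_abs, abs_of_nonneg (sq_nonneg _), Complex.ofReal_re]
    have hfival : f i = ‖C i i‖ * (‖g i‖ * ‖g i‖) := rfl
    rw [hfabs] at hfival
    rw [← hfival]
    exact hfi1
  rw [le_div_iff₀ hrepos]
  nlinarith [hbound]
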